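/- Let t ∈ (0,1) and let z ∈ ℂ lie in the open fourth quadrant (Re z > 0, Im z < 0) with |z| > 1. If Re φ(z, t) < Re φ(ζ(t), t), then Im φ_z(z, t) < 0, where φ_z(z,t) = −1/z + i t/(1−z) + i t/(1+z). -/

import Mathlib

open Complex Set

/-- `φ(z,t) = i t Log(1+z) - i t Log(1-z) - Log z`, with principal logarithms. -/
noncomputable def phiFn (t : ℝ) (z : ℂ) : ℂ :=
  Complex.I * (t : ℂ) * Complex.log (1 + z) - Complex.I * (t : ℂ) * Complex.log (1 - z) -
    Complex.log z

/-- The saddle point `ζ(t) = -i t + √(1-t²)`. -/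
noncomputable def zetaPt (t : ℝ) : ℂ :=
  -Complex.I * (t : ℂ) + (Real.sqrt (1 - t ^ 2) : ℂ)

/-- The `z`-derivative `φ_z(z,t) = -1/z + i t/(1-z) + i t/(1+z)`. -/
noncomputable def phiZ (t : ℝ) (z : ℂ) : ℂ :=
  -1 / z + Complex.I * (t : ℂ) / (1 - z) + Complex.I * (t : ℂ) / (1 + z)

open Real

lemma arg_eq_arctan_of_re_pos {z : ℂ} (h : 0 < z.re) :
    z.arg = Real.arctan (z.im / z.re) := by
  have h2 : |z.arg| < π / 2 := Complex.abs_arg_lt_pi_div_two_iff.2 (Or.inl h)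
  rw [← Complex.tan_arg, Real.arctan_tan (abs_lt.1 h2).1 (abs_lt.1 h2).2]

lemma re_phiFn (t : ℝ) (z : ℂ) :
    (phiFn t z).re = t * ((1 - z).arg - (1 + z).arg) - Real.log ‖z‖ := by
  simp [phiFn, Complex.sub_re, Complex.mul_re, Complex.mul_im, Complex.I_re, Complex.I_im,
    Complex.ofReal_re, Complex.ofReal_im, Complex.log_re, Complex.log_im]
  ring

/-- Value of `Re φ(ζ(t))`. -/
lemma re_phiFn_zeta {t : ℝ} (ht0 : 0 < t) (ht1 : t < 1) :
    (phiFn t (zetaPt t)).re = t * (π / 2) := by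
  set c := Real.sqrt (1 - t ^ 2) with hc
  have h1t : (0:ℝ) < 1 - t ^ 2 := by nlinarith
  have hc0 : 0 < c := Real.sqrt_pos.2 h1t
  have hc2 : c ^ 2 = 1 - t ^ 2 := Real.sq_sqrt h1t.le
  have hc1 : c < 1 := by nlinarith
  have hzre : (zetaPt t).re = c := by simp [zetaPt, hc]
  have hzim : (zetaPt t).im = -t := by simp [zetaPt]
  have habs1 : ‖zetaPt t‖ = 1 := by
    have h := Complex.sq_norm (zetaPt t)
    rw [Complex.normSq_apply, hzre, hzim] at h
    have : ‖zetaPt t‖ ^ 2 = 1 := by rw [h]; nlinarith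
    nlinarith [norm_nonneg (zetaPt t)]
  have h1re : (1 + zetaPt t).re = 1 + c := by simp [Complex.add_re, hzre]
  have h1im : (1 + zetaPt t).im = -t := by simp [Complex.add_im, hzim]
  have h2re : (1 - zetaPt t).re = 1 - c := by simp [Complex.sub_re, hzre]
  have h2im : (1 - zetaPt t).im = t := by simp [Complex.sub_im, hzim]
  have harg1 : (1 + zetaPt t).arg = Real.arctan (-t / (1 + c)) := by
    rw [arg_eq_arctan_of_re_pos (by rw [h1re]; linarith), h1re, h1im]
  have harg2 : (1 - zetaPt t).arg = Real.arctan (t / (1 - c)) := by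
    rw [arg_eq_arctan_of_re_pos (by rw [h2re]; linarith), h2re, h2im]
  have hkey : Real.arctan (t / (1 + c)) = π / 2 - Real.arctan (t / (1 - c)) := by
    have hinv : (t / (1 - c))⁻¹ = t / (1 + c) := by
      rw [inv_div]
      rw [div_eq_div_iff (ne_of_gt ht0) (by linarith : (1:ℝ) + c ≠ 0)]
      nlinarith
    rw [← hinv]
    exact Real.arctan_inv_of_pos (div_pos ht0 (by linarith))
  rw [re_phiFn, harg1, harg2, habs1, Real.log_one,
    show -t / (1 + c) = -(t / (1 + c)) from neg_div _ _, Real.arctan_neg]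
  rw [show Real.arctan (t / (1 - c)) - -Real.arctan (t / (1 + c))
      = Real.arctan (t / (1 - c)) + Real.arctan (t / (1 + c)) by ring, hkey]
  ring

lemma arg_diff {z : ℂ} (hre : 0 < z.re) (him : z.im < 0) (hR : 1 < z.re ^ 2 + z.im ^ 2) :
    (1 - z).arg - (1 + z).arg
      = π - Real.arctan (-2 * z.im / (z.re ^ 2 + z.im ^ 2 - 1)) := by
  set w : ℂ := (1 - z) * (starRingEnd ℂ) (1 + z) with hw
  have hwre : w.re = 1 - (z.re ^ 2 + z.im ^ 2) := by
    simp [hw, Complex.mul_re, Complex.sub_re, Complex.sub_im, Complex.add_re, Complex.add_im]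
    ring
  have hwim : w.im = -2 * z.im := by
    simp [hw, Complex.mul_im, Complex.sub_re, Complex.sub_im, Complex.add_re, Complex.add_im]
    ring
  have hwre0 : w.re < 0 := by rw [hwre]; linarith
  have hwim0 : 0 < w.im := by rw [hwim]; linarith
  have hw0 : w ≠ 0 := by
    intro h
    rw [h] at hwre0
    simp at hwre0
  -- arg w ∈ (π/2, π)
  have hargw_pos : 0 ≤ w.arg := Complex.arg_nonneg_iff.2 hwim0.le
  have hargw_lt : w.arg < π := Complex.arg_lt_pi_iff.2 (Or.inr hwim0.ne')
  have hargw_ne : w.arg ≠ π / 2 := by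
    intro h
    exact absurd (Complex.arg_eq_pi_div_two_iff.1 h).1 hwre0.ne
  have hargw_gt : π / 2 < w.arg := by
    have h1 : ¬ |w.arg| < π / 2 := by
      rw [Complex.abs_arg_lt_pi_div_two_iff]
      push_neg
      exact ⟨by linarith, hw0⟩
    have h2 : π / 2 ≤ |w.arg| := le_of_not_gt h1
    rw [_root_.abs_of_nonneg hargw_pos] at h2
    exact lt_of_le_of_ne h2 (Ne.symm hargw_ne)
  -- exact value of arg w
  have hargw : w.arg = π - Real.arctan (-2 * z.im / (z.re ^ 2 + z.im ^ 2 - 1)) := by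
    have hpi : 0 < π := Real.pi_pos
    have h5 : Real.arctan (Real.tan (w.arg - π)) = w.arg - π :=
      Real.arctan_tan (by linarith) (by linarith)
    rw [Real.tan_sub_pi, Complex.tan_arg, hwre, hwim] at h5
    have hdiv : -2 * z.im / (1 - (z.re ^ 2 + z.im ^ 2))
        = -(-2 * z.im / (z.re ^ 2 + z.im ^ 2 - 1)) := by
      rw [show (1 - (z.re ^ 2 + z.im ^ 2)) = -(z.re ^ 2 + z.im ^ 2 - 1) by ring, div_neg]
    rw [hdiv, Real.arctan_neg] at h5
    linarith
  -- angles
  have h1z : (1 : ℂ) + z ≠ 0 := fun h => by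
    have : (1 + z).re = 0 := by rw [h]; simp
    simp [Complex.add_re] at this; linarith
  have h2z : (1 : ℂ) - z ≠ 0 := fun h => by
    have : (1 - z).im = 0 := by rw [h]; simp
    simp [Complex.sub_im] at this; linarith
  have hconj : (starRingEnd ℂ) (1 + z) ≠ 0 := by
    rw [ne_eq, starRingEnd_apply, star_eq_zero]
    exact h1z
  have hang : (w.arg : Real.Angle) = (((1 - z).arg - (1 + z).arg : ℝ) : Real.Angle) := by
    rw [hw, Complex.arg_mul_coe_angle h2z hconj, Complex.arg_conj_coe_angle]
    rw [Real.Angle.coe_sub]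
    abel
  obtain ⟨k, hk⟩ := Real.Angle.angle_eq_iff_two_pi_dvd_sub.1 hang
  -- bounds on the two args
  have ha2neg : (1 + z).arg < 0 := Complex.arg_neg_iff.2 (by simp [Complex.add_im, him])
  have ha2gt : -(π / 2) < (1 + z).arg := by
    have : |(1 + z).arg| < π / 2 := Complex.abs_arg_lt_pi_div_two_iff.2
      (Or.inl (by simp [Complex.add_re]; linarith))
    exact (abs_lt.1 this).1
  have ha1pos : 0 ≤ (1 - z).arg := Complex.arg_nonneg_iff.2 (by simp [Complex.sub_im]; linarith)
  have ha1le : (1 - z).arg ≤ π := Complex.arg_le_pi _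
  have hk0 : (k : ℝ) = 0 := by
    have hpi : 0 < π := Real.pi_pos
    have hb1 : w.arg - ((1 - z).arg - (1 + z).arg) < π := by linarith
    have hb2 : -π < w.arg - ((1 - z).arg - (1 + z).arg) := by linarith
    rw [hk] at hb1 hb2
    have hk1 : (k : ℝ) < 1 := by nlinarith
    have hk2 : (-1 : ℝ) < k := by nlinarith
    have h1 : k < 1 := by exact_mod_cast hk1
    have h2 : (-1 : ℤ) < k := by exact_mod_cast hk2
    have : k = 0 := by omega
    exact_mod_cast this
  rw [hk0, mul_zero] at hk
  linarith [hargw, hk]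
set_option maxHeartbeats 1000000 in
theorem im_phiZ_neg (t : ℝ) (ht : t ∈ Ioo (0 : ℝ) 1) (z : ℂ)
    (hre : 0 < z.re) (him : z.im < 0) (habs : 1 < ‖z‖)
    (hphi : (phiFn t z).re < (phiFn t (zetaPt t)).re) :
    (phiZ t z).im < 0 := by
  obtain ⟨ht0, ht1⟩ := ht
  have habs0 : (0:ℝ) < ‖z‖ := by linarith
  have hR : 1 < z.re ^ 2 + z.im ^ 2 := by
    have h := Complex.sq_norm z
    rw [Complex.normSq_apply] at h
    nlinarith
  have hE0 : (0:ℝ) < z.re ^ 2 + z.im ^ 2 - 1 := by linarith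
  set E : ℝ := z.re ^ 2 + z.im ^ 2 - 1 with hE
  set u : ℝ := -z.im with hu
  have hu0 : (0:ℝ) < u := by simp [hu]; linarith
  set r : ℝ := ‖z‖ with hr
  have hr1 : 1 < r := habs
  have hr0 : 0 < r := by linarith
  have hr2 : r ^ 2 = z.re ^ 2 + z.im ^ 2 := by
    rw [hr, Complex.sq_norm, Complex.normSq_apply]; ring
  set L : ℝ := Real.log r with hL
  have hL0 : 0 < L := Real.log_pos hr1
  -- rewrite hphi
  rw [re_phiFn, re_phiFn_zeta ht0 ht1, arg_diff hre him hR] at hphi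
  have h2u : -2 * z.im / (z.re ^ 2 + z.im ^ 2 - 1) = 2 * u / E := by
    rw [hu, hE]; ring
  rw [h2u] at hphi
  -- step 1 : t * arctan (E / (2u)) < L
  have hstep1 : t * Real.arctan (E / (2 * u)) < L := by
    have hx1 : Real.arctan ((2 * u / E)⁻¹) = π / 2 - Real.arctan (2 * u / E) :=
      Real.arctan_inv_of_pos (by positivity)
    rw [inv_div] at hx1
    have hid : t * Real.arctan (E / (2 * u))
        = t * (π - Real.arctan (2 * u / E)) - t * (π / 2) := by
      rw [hx1]; ring
    rw [hid]
    linarith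
  -- step 2 : L < E / (2r)
  have hlog : L < E / (2 * r) := by
    have h1 : L < Real.sinh L := Real.self_lt_sinh_iff.2 hL0
    rw [Real.sinh_eq, hL, Real.exp_log hr0, Real.exp_neg, Real.exp_log hr0] at h1
    have h2 : (r - r⁻¹) / 2 = E / (2 * r) := by
      rw [hE, ← hr2]
      field_simp
    rw [h2] at h1
    exact lt_of_lt_of_le h1 (le_refl _)
  -- step 3 : E / sqrt S < arctan (E / (2u))
  set S : ℝ := 4 * z.im ^ 2 + E ^ 2 with hS
  have hS0 : (0:ℝ) < S := by positivity
  have hsqrtS : 0 < Real.sqrt S := Real.sqrt_pos.2 hS0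
  have hsin : E / Real.sqrt S < Real.arctan (E / (2 * u)) := by
    have hv : (0:ℝ) < E / (2 * u) := by positivity
    have hpos : 0 < Real.arctan (E / (2 * u)) := by
      have := Real.arctan_strictMono hv
      rwa [Real.arctan_zero] at this
    have h1 : Real.sin (Real.arctan (E / (2 * u))) < Real.arctan (E / (2 * u)) :=
      Real.sin_lt hpos
    rw [Real.sin_arctan] at h1
    have h2 : E / (2 * u) / Real.sqrt (1 + (E / (2 * u)) ^ 2) = E / Real.sqrt S := by
      have hq : 1 + (E / (2 * u)) ^ 2 = S / (2 * u) ^ 2 := by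
        have him2 : z.im ^ 2 = u ^ 2 := by rw [hu]; ring
        rw [hS, him2]
        field_simp
        ring
      rw [hq, Real.sqrt_div hS0.le, Real.sqrt_sq (by positivity : (0:ℝ) ≤ 2 * u)]
      field_simp
    rwa [h2] at h1
  -- step 4 : t * (2r) < sqrt S
  have ht_bd : t * (2 * r) < Real.sqrt S := by
    have h3 : t * (E / Real.sqrt S) < E / (2 * r) := by
      have := mul_lt_mul_of_pos_left hsin ht0
      linarith [hstep1, hlog]
    rw [← mul_div_assoc] at h3
    have h5 := (div_lt_div_iff₀ hsqrtS (by positivity : (0:ℝ) < 2 * r)).1 h3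
    -- h5 : t * E * (2 * r) < E * sqrt S
    have h6 : t * (2 * r) = t * E * (2 * r) / E := by field_simp
    rw [h6, div_lt_iff₀ hE0]
    rw [mul_comm (Real.sqrt S) E] at *
    linarith [h5]
  -- the imaginary part
  have him_eq : (phiZ t z).im = z.im / (z.re ^ 2 + z.im ^ 2)
      + t * (1 - z.re) / ((1 - z.re) ^ 2 + z.im ^ 2)
      + t * (1 + z.re) / ((1 + z.re) ^ 2 + z.im ^ 2) := by
    rw [phiZ]
    simp [Complex.div_im, Complex.normSq_apply, Complex.add_im, Complex.add_re, Complex.sub_re,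
      Complex.sub_im, Complex.mul_re, Complex.mul_im, Complex.I_re, Complex.I_im,
      Complex.ofReal_re, Complex.ofReal_im]
    ring
  set s : ℝ := 1 - z.re ^ 2 + z.im ^ 2 with hs
  set n1 : ℝ := (1 - z.re) ^ 2 + z.im ^ 2 with hn1
  set n2 : ℝ := (1 + z.re) ^ 2 + z.im ^ 2 with hn2
  have him2 : 0 < z.im ^ 2 := by nlinarith
  have hn10 : 0 < n1 := by rw [hn1]; nlinarith [sq_nonneg (1 - z.re)]
  have hn20 : 0 < n2 := by rw [hn2]; nlinarith [sq_nonneg (1 + z.re)]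
  have hR0 : (0:ℝ) < z.re ^ 2 + z.im ^ 2 := by linarith
  have him_eq2 : (phiZ t z).im = z.im / (z.re ^ 2 + z.im ^ 2) + t * (2 * s) / (n1 * n2) := by
    rw [him_eq, hs, hn1, hn2]
    field_simp
    ring
  rw [him_eq2]
  rcases le_or_gt s 0 with hs0 | hs0
  · have h1 : z.im / (z.re ^ 2 + z.im ^ 2) < 0 := div_neg_of_neg_of_pos him hR0
    have h2 : t * (2 * s) / (n1 * n2) ≤ 0 := by
      apply div_nonpos_of_nonpos_of_nonneg
      · have : t * (2 * s) = 2 * (t * s) := by ring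
        rw [this]
        have := mul_nonpos_iff.2 (Or.inl ⟨ht0.le, hs0⟩)
        linarith
      · positivity
    linarith
  · have hkey : t * (2 * s) / (n1 * n2) < u / (z.re ^ 2 + z.im ^ 2) := by
      rw [div_lt_div_iff₀ (by positivity) hR0]
      have hc1 : t * (2 * s) * (z.re ^ 2 + z.im ^ 2) = t * (2 * r) * (s * r) := by
        rw [← hr2]; ring
      have hc2 : t * (2 * r) * (s * r) < Real.sqrt S * (s * r) :=
        mul_lt_mul_of_pos_right ht_bd (mul_pos hs0 hr0)
      have hc3 : Real.sqrt S * (s * r) ≤ u * (n1 * n2) := by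
        have e1 : Real.sqrt S * (s * r) = Real.sqrt (S * (s ^ 2 * (z.re ^ 2 + z.im ^ 2))) := by
          rw [Real.sqrt_mul hS0.le, Real.sqrt_mul (sq_nonneg s), Real.sqrt_sq hs0.le, ← hr2,
            Real.sqrt_sq hr0.le]
        have e2 : u * (n1 * n2) = Real.sqrt (z.im ^ 2 * (n1 * n2) ^ 2) := by
          rw [Real.sqrt_mul (sq_nonneg z.im), Real.sqrt_sq_eq_abs, abs_of_neg him,
            Real.sqrt_sq (by positivity : (0:ℝ) ≤ n1 * n2), hu]
        rw [e1, e2]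
        apply Real.sqrt_le_sqrt
        have hid : z.im ^ 2 * (n1 * n2) ^ 2 - S * (s ^ 2 * (z.re ^ 2 + z.im ^ 2))
            = z.re ^ 2 * E * (s + 2 * z.im ^ 2) * S := by
          rw [hS, hE, hs, hn1, hn2]; ring
        have hnn : 0 ≤ z.re ^ 2 * E * (s + 2 * z.im ^ 2) * S :=
          mul_nonneg (mul_nonneg (mul_nonneg (sq_nonneg z.re) hE0.le) (by nlinarith)) hS0.le
        linarith [hid, hnn]
      linarith
    have hzero : z.im / (z.re ^ 2 + z.im ^ 2) + u / (z.re ^ 2 + z.im ^ 2) = 0 := by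
      rw [hu, ← add_div]; simp
    linarith
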